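/- Let γ, ρ, h₀, k_s, k_l, α_s, α_l be positive real constants and T₀ > T_∞ real constants. The function W : (0,∞) → ℝ defined by W(x) = T_∞ + (T₀ − T_∞)/(F₂(x) + 1) + γρ√(π α_s α_l)/H(x) is strictly increasing on (0,∞), with W(x) → T_∞ + (T₀ − T_∞)/(1 + h₀√(π α_l)/k_l) as x → 0⁺ and W(x) → T₀ + γρα_l/k_l as x → +∞. -/

import Mathlib

open Real Filter Set

/-- Gauss error function `erf x = (2/√π) ∫₀ˣ e^{−t²} dt`. -/
noncomputable def erf (x : ℝ) : ℝ := (2 / Real.sqrt π) * ∫ t in (0:ℝ)..x, Real.exp (-t ^ 2)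

/-- Complementary error function. -/
noncomputable def erfc (x : ℝ) : ℝ := 1 - erf x

/-- `Q(x) = √π · x · e^{x²} · erfc(x)`. -/
noncomputable def Qf (x : ℝ) : ℝ := Real.sqrt π * x * Real.exp (x ^ 2) * erfc x

/-- `F₁(x) = erfc(x) · e^{x²}`. -/
noncomputable def F1f (x : ℝ) : ℝ := erfc x * Real.exp (x ^ 2)

/-- `F₂(x) = h₀ k_s √(π α_l) e^{−x²} F₁((√α_s/√α_l)x) / (k_l(k_s + h₀√(π α_s) erf(x)))`. -/
noncomputable def F2f (h₀ ks kl αs αl : ℝ) (x : ℝ) : ℝ :=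
  h₀ * ks * Real.sqrt (π * αl) * Real.exp (-x ^ 2)
      * F1f ((Real.sqrt αs / Real.sqrt αl) * x)
    / (kl * (ks + h₀ * Real.sqrt (π * αs) * erf x))

/-- `H(x) = h₀ k_s √(π α_l)/(x e^{x²}(k_s + h₀√(π α_s) erf(x)))
           + k_l √(π α_s)/(√α_l · Q((√α_s/√α_l)x))`. -/
noncomputable def Hf (h₀ ks kl αs αl : ℝ) (x : ℝ) : ℝ :=
  h₀ * ks * Real.sqrt (π * αl)
      / (x * Real.exp (x ^ 2) * (ks + h₀ * Real.sqrt (π * αs) * erf x))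
    + kl * Real.sqrt (π * αs)
      / (Real.sqrt αl * Qf ((Real.sqrt αs / Real.sqrt αl) * x))

/-- `W(x) = T_∞ + (T₀ − T_∞)/(F₂(x) + 1) + γρ√(π α_s α_l)/H(x)`. -/
noncomputable def Wf (γ ρ h₀ ks kl αs αl T₀ Tinf : ℝ) (x : ℝ) : ℝ :=
  Tinf + (T₀ - Tinf) / (F2f h₀ ks kl αs αl x + 1)
    + γ * ρ * Real.sqrt (π * αs * αl) / Hf h₀ ks kl αs αl x

section WfAux
open MeasureTheory

noncomputable def Ig (x : ℝ) : ℝ := ∫ t in Set.Ioi x, Real.exp (-t ^ 2)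

lemma integrable_g : Integrable (fun t : ℝ => Real.exp (-t ^ 2)) := by
  have := integrable_exp_neg_mul_sq (b := (1:ℝ)) one_pos
  simpa using this

lemma Ig_pos (x : ℝ) : 0 < Ig x := by
  rw [Ig, setIntegral_pos_iff_support_of_nonneg_ae]
  · have : (Function.support fun t : ℝ => Real.exp (-t ^ 2)) = Set.univ := by
      ext t; simp [Function.support, (Real.exp_pos _).ne']
    rw [this]
    simp [Set.univ_inter]
  · filter_upwards with t using (Real.exp_pos _).le
  · exact integrable_g.integrableOn

lemma Ig_zero : Ig 0 = Real.sqrt π / 2 := by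
  have := integral_gaussian_Ioi 1
  simpa [Ig] using this

lemma interval_add_Ig (x : ℝ) (hx : 0 ≤ x) :
    (∫ t in (0:ℝ)..x, Real.exp (-t ^ 2)) + Ig x = Ig 0 := by
  rw [intervalIntegral.integral_of_le hx, Ig, Ig,
    ← MeasureTheory.setIntegral_union]
  · rw [Set.Ioc_union_Ioi_eq_Ioi hx]
  · exact Set.Ioc_disjoint_Ioi le_rfl
  · exact measurableSet_Ioi
  · exact integrable_g.integrableOn
  · exact integrable_g.integrableOn


lemma sqrt_pi_pos : 0 < Real.sqrt π := Real.sqrt_pos.2 Real.pi_pos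

lemma erfc_eq (x : ℝ) (hx : 0 ≤ x) : erfc x = (2 / Real.sqrt π) * Ig x := by
  have h := interval_add_Ig x hx
  have h2 : (∫ t in (0:ℝ)..x, Real.exp (-t ^ 2)) = Real.sqrt π / 2 - Ig x := by
    rw [← Ig_zero]; linarith
  rw [erfc, erf, h2]
  field_simp
  ring

lemma hasDerivAt_erf (x : ℝ) :
    HasDerivAt erf ((2 / Real.sqrt π) * Real.exp (-x ^ 2)) x := by
  have hc : Continuous fun t : ℝ => Real.exp (-t ^ 2) := by continuity
  have h : HasDerivAt (fun y => ∫ t in (0:ℝ)..y, Real.exp (-t ^ 2))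
      (Real.exp (-x ^ 2)) x := by
    exact (hc.integral_hasStrictDerivAt 0 x).hasDerivAt
  exact h.const_mul (2 / Real.sqrt π)

lemma continuous_erf : Continuous erf :=
  continuous_iff_continuousAt.2 fun x => (hasDerivAt_erf x).continuousAt

lemma erf_zero : erf 0 = 0 := by simp [erf]

lemma erf_strictMono : StrictMono erf := by
  apply strictMono_of_deriv_pos
  intro x
  rw [(hasDerivAt_erf x).deriv]
  positivity

lemma erf_nonneg {x : ℝ} (hx : 0 ≤ x) : 0 ≤ erf x := by
  rcases hx.eq_or_lt with h | h
  · simp [← h, erf_zero]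
  · simpa [erf_zero] using (erf_strictMono h).le

lemma erfc_pos {x : ℝ} (hx : 0 ≤ x) : 0 < erfc x := by
  rw [erfc_eq x hx]
  have := Ig_pos x
  positivity

-- exact tail integral of t * exp(-t^2)
lemma tail_t_exp (x : ℝ) (hx : 0 < x) :
    ∫ t in Set.Ioi x, t * Real.exp (-t ^ 2) = Real.exp (-x ^ 2) / 2 := by
  have hderiv : ∀ t ∈ Set.Ici x, HasDerivAt (fun u : ℝ => -Real.exp (-u ^ 2) / 2)
      (t * Real.exp (-t ^ 2)) t := by
    intro t _
    have h1 : HasDerivAt (fun u : ℝ => -u ^ 2) (-(2 * t)) t := by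
      exact (by simpa using (hasDerivAt_pow 2 t).neg : HasDerivAt (-fun x : ℝ => x ^ 2) (-(2 * t)) t)
    have h2 := (h1.exp).neg.div_const 2
    refine h2.congr_deriv ?_
    ring
  have htend : Tendsto (fun u : ℝ => -Real.exp (-u ^ 2) / 2) atTop (nhds 0) := by
    have : Tendsto (fun u : ℝ => -u ^ 2) atTop atBot := by
      apply tendsto_neg_atBot_iff.2
      exact tendsto_pow_atTop (by norm_num)
    have := (Real.tendsto_exp_atBot.comp this).neg.div_const 2
    simpa using this
  have := integral_Ioi_of_hasDerivAt_of_nonneg' hderiv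
    (fun t ht => by
      have : 0 < t := hx.trans ht
      positivity) htend
  rw [this]
  ring

lemma integrableOn_tail_t_exp (x : ℝ) (hx : 0 < x) :
    IntegrableOn (fun t : ℝ => t * Real.exp (-t ^ 2)) (Set.Ioi x) := by
  have hderiv : ∀ t ∈ Set.Ici x, HasDerivAt (fun u : ℝ => -Real.exp (-u ^ 2) / 2)
      (t * Real.exp (-t ^ 2)) t := by
    intro t _
    have h1 : HasDerivAt (fun u : ℝ => -u ^ 2) (-(2 * t)) t := by
      exact (by simpa using (hasDerivAt_pow 2 t).neg : HasDerivAt (-fun x : ℝ => x ^ 2) (-(2 * t)) t)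
    have h2 := (h1.exp).neg.div_const 2
    refine h2.congr_deriv ?_
    ring
  have htend : Tendsto (fun u : ℝ => -Real.exp (-u ^ 2) / 2) atTop (nhds 0) := by
    have : Tendsto (fun u : ℝ => -u ^ 2) atTop atBot := by
      apply tendsto_neg_atBot_iff.2
      exact tendsto_pow_atTop (by norm_num)
    have := (Real.tendsto_exp_atBot.comp this).neg.div_const 2
    simpa using this
  exact integrableOn_Ioi_deriv_of_nonneg' hderiv
    (fun t ht => by
      have : 0 < t := hx.trans ht
      positivity) htend

-- upper bound
lemma Ig_le (x : ℝ) (hx : 0 < x) : Ig x ≤ Real.exp (-x ^ 2) / (2 * x) := by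
  have hle : Ig x ≤ ∫ t in Set.Ioi x, (t / x) * Real.exp (-t ^ 2) := by
    apply setIntegral_mono_on integrable_g.integrableOn
    · have := (integrableOn_tail_t_exp x hx).div_const x
      apply this.congr
      filter_upwards with t using by ring
    · exact measurableSet_Ioi
    · intro t ht
      have h1 : (1:ℝ) ≤ t / x := (one_le_div hx).2 (le_of_lt ht)
      nlinarith [Real.exp_pos (-t ^ 2)]
  have heq : ∫ t in Set.Ioi x, (t / x) * Real.exp (-t ^ 2)
      = Real.exp (-x ^ 2) / (2 * x) := by
    have : ∀ t : ℝ, (t / x) * Real.exp (-t ^ 2) = (t * Real.exp (-t ^ 2)) / x := by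
      intro t; ring
    simp_rw [this]
    rw [integral_div, tail_t_exp x hx]
    field_simp
  linarith [hle, heq.le]


lemma exp_neg_sq_tendsto : Tendsto (fun x : ℝ => Real.exp (-x ^ 2)) atTop (nhds 0) := by
  apply Real.tendsto_exp_atBot.comp
  apply tendsto_neg_atBot_iff.2
  exact tendsto_pow_atTop (by norm_num)

lemma Ig_tendsto_zero : Tendsto Ig atTop (nhds 0) := by
  apply squeeze_zero' (Eventually.of_forall fun x => (Ig_pos x).le)
  · filter_upwards [eventually_gt_atTop (0:ℝ)] with x hx using Ig_le x hx
  · have h1 : Tendsto (fun x : ℝ => (2 * x)⁻¹) atTop (nhds 0) := by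
      apply Tendsto.inv_tendsto_atTop
      exact (tendsto_id.const_mul_atTop two_pos)
    have := exp_neg_sq_tendsto.mul h1
    simpa [div_eq_mul_inv] using this

lemma Ig_eq_on (x : ℝ) (hx : 0 ≤ x) :
    Ig x = Ig 0 - ∫ t in (0:ℝ)..x, Real.exp (-t ^ 2) := by
  have := interval_add_Ig x hx; linarith

lemma continuous_intInt : Continuous (fun y : ℝ => ∫ t in (0:ℝ)..y, Real.exp (-t ^ 2)) := by
  have hc : Continuous fun t : ℝ => Real.exp (-t ^ 2) := by continuity
  exact continuous_iff_continuousAt.2 fun x =>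
    ((hc.integral_hasStrictDerivAt 0 x).hasDerivAt).continuousAt

lemma hasDerivAt_Ig (x : ℝ) (hx : 0 < x) :
    HasDerivAt Ig (-Real.exp (-x ^ 2)) x := by
  have hc : Continuous fun t : ℝ => Real.exp (-t ^ 2) := by continuity
  have h : HasDerivAt (fun y => Ig 0 - ∫ t in (0:ℝ)..y, Real.exp (-t ^ 2))
      (-Real.exp (-x ^ 2)) x := by
    simpa using ((hc.integral_hasStrictDerivAt 0 x).hasDerivAt).const_sub (Ig 0)
  apply h.congr_of_eventuallyEq
  filter_upwards [eventually_gt_nhds hx] with y hy using Ig_eq_on y hy.le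

lemma continuousOn_Ig : ContinuousOn Ig (Set.Ici 0) := by
  apply ContinuousOn.congr (f := fun y => Ig 0 - ∫ t in (0:ℝ)..y, Real.exp (-t ^ 2))
  · exact (continuous_const.sub continuous_intInt).continuousOn
  · intro y hy; exact Ig_eq_on y hy

noncomputable def ψ (x : ℝ) : ℝ := x * Real.exp (-x ^ 2) / (2 * x ^ 2 + 1)

lemma hasDerivAt_ψ (x : ℝ) : HasDerivAt ψ
    ((Real.exp (-x ^ 2) * (1 - 2 * x ^ 2) * (2 * x ^ 2 + 1)
      - x * Real.exp (-x ^ 2) * (4 * x)) / (2 * x ^ 2 + 1) ^ 2) x := by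
  have hd : (2 * x ^ 2 + 1 : ℝ) ≠ 0 := by positivity
  have h1 : HasDerivAt (fun u : ℝ => -u ^ 2) (-(2 * x)) x := by
    exact (by simpa using (hasDerivAt_pow 2 x).neg : HasDerivAt (-fun x : ℝ => x ^ 2) (-(2 * x)) x)
  have hn : HasDerivAt (fun u : ℝ => u * Real.exp (-u ^ 2))
      (Real.exp (-x ^ 2) * (1 - 2 * x ^ 2)) x := by
    have := (hasDerivAt_id x).mul h1.exp
    simp only [id_eq] at this
    refine this.congr_deriv ?_
    ring
  have hden : HasDerivAt (fun u : ℝ => 2 * u ^ 2 + 1) (4 * x) x := by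
    have := ((hasDerivAt_pow 2 x).const_mul 2).add_const 1
    refine this.congr_deriv ?_
    ring
  exact hn.div hden hd

lemma ψ_tendsto_zero : Tendsto ψ atTop (nhds 0) := by
  apply squeeze_zero' (g := fun x => Real.exp (-x ^ 2) / 2)
  · filter_upwards [eventually_gt_atTop (0:ℝ)] with x hx
    unfold ψ; positivity
  · filter_upwards [eventually_gt_atTop (0:ℝ)] with x hx
    unfold ψ
    rw [div_le_div_iff₀ (by positivity) (by norm_num)]
    nlinarith [Real.exp_pos (-x ^ 2), sq_nonneg (x - 1)]
  · simpa using exp_neg_sq_tendsto.div_const 2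

lemma Ig_ge (x : ℝ) (hx : 0 ≤ x) :
    x * Real.exp (-x ^ 2) / (2 * x ^ 2 + 1) ≤ Ig x := by
  set φ := fun y => Ig y - ψ y with hφ
  have hanti : AntitoneOn φ (Set.Ici 0) := by
    apply antitoneOn_of_deriv_nonpos (convex_Ici 0)
    · exact (continuousOn_Ig.sub (fun y _ => (hasDerivAt_ψ y).continuousAt.continuousWithinAt))
    · intro y hy
      rw [interior_Ici] at hy
      exact ((hasDerivAt_Ig y hy).sub (hasDerivAt_ψ y)).differentiableAt.differentiableWithinAt
    · intro y hy
      rw [interior_Ici] at hy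
      have hdy : HasDerivAt φ (-Real.exp (-y ^ 2)
          - ((Real.exp (-y ^ 2) * (1 - 2 * y ^ 2) * (2 * y ^ 2 + 1)
            - y * Real.exp (-y ^ 2) * (4 * y)) / (2 * y ^ 2 + 1) ^ 2)) y :=
        (hasDerivAt_Ig y hy).sub (hasDerivAt_ψ y)
      rw [hdy.deriv]
      have hE := Real.exp_pos (-y ^ 2)
      have hd : (0:ℝ) < (2 * y ^ 2 + 1) ^ 2 := by positivity
      rw [sub_nonpos, le_div_iff₀ hd]
      nlinarith [sq_nonneg y, sq_nonneg (y^2)]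
  have hlim : Tendsto φ atTop (nhds 0) := by
    simpa using Ig_tendsto_zero.sub ψ_tendsto_zero
  have : 0 ≤ φ x := by
    apply le_of_tendsto hlim
    filter_upwards [eventually_ge_atTop x] with y hy
    exact hanti hx (le_trans hx hy) hy
  have : ψ x ≤ Ig x := by simpa [hφ, sub_nonneg] using this
  simpa [ψ] using this


lemma exp_mul_exp_neg (x : ℝ) : Real.exp (-x ^ 2) * Real.exp (x ^ 2) = 1 := by
  rw [← Real.exp_add]; simp

lemma continuous_erfc : Continuous erfc := continuous_const.sub continuous_erf
lemma continuous_F1f : Continuous F1f :=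
  continuous_erfc.mul (by continuity)
lemma continuous_Qf : Continuous Qf :=
  (by continuity : Continuous fun x : ℝ => Real.sqrt π * x * Real.exp (x ^ 2)).mul continuous_erfc

lemma erf_tendsto_one : Tendsto erf atTop (nhds 1) := by
  have h : Tendsto erfc atTop (nhds 0) := by
    have h2 : Tendsto (fun x => (2 / Real.sqrt π) * Ig x) atTop (nhds 0) := by
      simpa using Ig_tendsto_zero.const_mul (2 / Real.sqrt π)
    apply h2.congr'
    filter_upwards [eventually_ge_atTop (0:ℝ)] with x hx using (erfc_eq x hx).symm
  have := tendsto_const_nhds (x := (1:ℝ)) (f := atTop).sub h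
  simpa [erfc] using this

lemma hasDerivAt_erfc (x : ℝ) :
    HasDerivAt erfc (-((2 / Real.sqrt π) * Real.exp (-x ^ 2))) x := by
  exact (hasDerivAt_erf x).const_sub 1

lemma hasDerivAt_exp_sq (x : ℝ) :
    HasDerivAt (fun u : ℝ => Real.exp (u ^ 2)) (2 * x * Real.exp (x ^ 2)) x := by
  have h := (hasDerivAt_pow 2 x).exp
  convert h using 1
  ring

lemma hasDerivAt_F1f (x : ℝ) :
    HasDerivAt F1f (-((2 / Real.sqrt π) * Real.exp (-x ^ 2)) * Real.exp (x ^ 2)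
      + erfc x * (2 * x * Real.exp (x ^ 2))) x :=
  (hasDerivAt_erfc x).mul (hasDerivAt_exp_sq x)

lemma F1f_anti : AntitoneOn F1f (Set.Ici 0) := by
  apply antitoneOn_of_deriv_nonpos (convex_Ici 0) continuous_F1f.continuousOn
  · intro x _
    exact (hasDerivAt_F1f x).differentiableAt.differentiableWithinAt
  · intro x hx
    rw [interior_Ici] at hx
    have hx' : (0:ℝ) < x := hx
    rw [(hasDerivAt_F1f x).deriv]
    have h1 : 2 * x * Ig x ≤ Real.exp (-x ^ 2) := by
      have := Ig_le x hx
      rw [le_div_iff₀ (by linarith : (0:ℝ) < 2 * x)] at this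
      linarith
    have hkey := exp_mul_exp_neg x
    have herfc := erfc_eq x hx.le
    have hsp := sqrt_pi_pos
    have hex : (0:ℝ) < Real.exp (x ^ 2) := Real.exp_pos _
    rw [herfc]
    have h2 : (2 / Real.sqrt π) * Real.exp (x ^ 2) * (2 * x * Ig x)
        ≤ (2 / Real.sqrt π) * Real.exp (x ^ 2) * Real.exp (-x ^ 2) := by
      apply mul_le_mul_of_nonneg_left h1 (by positivity)
    nlinarith
  
lemma hasDerivAt_Qf (x : ℝ) :
    HasDerivAt Qf ((Real.sqrt π * 1) * Real.exp (x ^ 2) * erfc x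
      + (Real.sqrt π * x) * (2 * x * Real.exp (x ^ 2)) * erfc x
      + (Real.sqrt π * x) * Real.exp (x ^ 2)
        * (-((2 / Real.sqrt π) * Real.exp (-x ^ 2)))) x := by
  have h1 : HasDerivAt (fun u : ℝ => Real.sqrt π * u) (Real.sqrt π * 1) x :=
    (hasDerivAt_id x).const_mul (Real.sqrt π)
  have h2 := h1.mul (hasDerivAt_exp_sq x)
  have h3 := h2.mul (hasDerivAt_erfc x)
  refine h3.congr_deriv ?_
  simp only [Pi.mul_apply]
  ring

lemma Qf_mono : MonotoneOn Qf (Set.Ici 0) := by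
  apply monotoneOn_of_deriv_nonneg (convex_Ici 0) continuous_Qf.continuousOn
  · intro x _
    exact (hasDerivAt_Qf x).differentiableAt.differentiableWithinAt
  · intro x hx
    rw [interior_Ici] at hx
    rw [(hasDerivAt_Qf x).deriv]
    have h1 : x * Real.exp (-x ^ 2) ≤ (2 * x ^ 2 + 1) * Ig x := by
      have := Ig_ge x hx.le
      rw [div_le_iff₀ (by positivity)] at this
      linarith
    have hkey := exp_mul_exp_neg x
    have herfc := erfc_eq x hx.le
    have hsp := sqrt_pi_pos
    have hex : (0:ℝ) < Real.exp (x ^ 2) := Real.exp_pos _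
    have hspi : Real.sqrt π * (2 / Real.sqrt π) = 2 := by field_simp
    rw [herfc]
    have h2 : (2 / Real.sqrt π) * Real.sqrt π * Real.exp (x ^ 2) * (x * Real.exp (-x ^ 2))
        ≤ (2 / Real.sqrt π) * Real.sqrt π * Real.exp (x ^ 2) * ((2 * x ^ 2 + 1) * Ig x) := by
      apply mul_le_mul_of_nonneg_left h1 (by positivity)
    nlinarith

lemma Qf_pos {x : ℝ} (hx : 0 < x) : 0 < Qf x := by
  have := erfc_pos hx.le
  unfold Qf
  have := sqrt_pi_pos
  positivity

lemma Qf_le_one {x : ℝ} (hx : 0 ≤ x) : Qf x ≤ 1 := by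
  rcases hx.eq_or_lt with h | h
  · simp [Qf, ← h]
  · unfold Qf
    rw [erfc_eq x h.le]
    have h1 : 2 * x * Ig x ≤ Real.exp (-x ^ 2) := by
      have := Ig_le x h
      rw [le_div_iff₀ (by linarith : (0:ℝ) < 2 * x)] at this
      linarith
    have hkey := exp_mul_exp_neg x
    have hsp := sqrt_pi_pos
    have hex : (0:ℝ) < Real.exp (x ^ 2) := Real.exp_pos _
    have h2 : Real.exp (x ^ 2) * (2 * x * Ig x) ≤ Real.exp (x ^ 2) * Real.exp (-x ^ 2) := by
      apply mul_le_mul_of_nonneg_left h1 hex.le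
    have hspi : Real.sqrt π * (2 / Real.sqrt π) = 2 := by field_simp
    nlinarith

lemma Qf_ge {x : ℝ} (hx : 0 ≤ x) : 2 * x ^ 2 / (2 * x ^ 2 + 1) ≤ Qf x := by
  unfold Qf
  rw [erfc_eq x hx]
  have h1 : x * Real.exp (-x ^ 2) ≤ (2 * x ^ 2 + 1) * Ig x := by
    have := Ig_ge x hx
    rw [div_le_iff₀ (by positivity)] at this
    linarith
  have hkey := exp_mul_exp_neg x
  have hsp := sqrt_pi_pos
  have hex : (0:ℝ) < Real.exp (x ^ 2) := Real.exp_pos _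
  have hrw : Real.sqrt π * x * Real.exp (x ^ 2) * (2 / Real.sqrt π * Ig x)
      = 2 * x * Real.exp (x ^ 2) * Ig x := by
    field_simp
  rw [hrw, div_le_iff₀ (by positivity)]
  calc 2 * x ^ 2 = 2 * x * (x * Real.exp (-x ^ 2)) * Real.exp (x ^ 2) := by
        linear_combination (-(2 * x ^ 2)) * hkey
    _ ≤ 2 * x * ((2 * x ^ 2 + 1) * Ig x) * Real.exp (x ^ 2) := by
        gcongr
    _ = 2 * x * Real.exp (x ^ 2) * Ig x * (2 * x ^ 2 + 1) := by ring

lemma Qf_tendsto_one : Tendsto Qf atTop (nhds 1) := by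
  have hlow : Tendsto (fun x : ℝ => 2 * x ^ 2 / (2 * x ^ 2 + 1)) atTop (nhds 1) := by
    have h : ∀ᶠ x : ℝ in atTop, 2 * x ^ 2 / (2 * x ^ 2 + 1)
        = 1 - 1 / (2 * x ^ 2 + 1) := by
      filter_upwards [eventually_gt_atTop (0:ℝ)] with x hx
      field_simp
      ring
    rw [tendsto_congr' h]
    have h2 : Tendsto (fun x : ℝ => 2 * x ^ 2 + 1) atTop atTop := by
      apply tendsto_atTop_add_const_right
      exact (tendsto_pow_atTop (by norm_num)).const_mul_atTop two_pos
    have := h2.inv_tendsto_atTop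
    have h3 := (tendsto_const_nhds (x := (1:ℝ)) (f := atTop)).sub this
    simpa [one_div] using h3
  exact tendsto_of_tendsto_of_tendsto_of_le_of_le' hlow tendsto_const_nhds
    (eventually_ge_atTop 0 |>.mono fun x hx => Qf_ge hx)
    (eventually_ge_atTop 0 |>.mono fun x hx => Qf_le_one hx)

lemma F1f_pos {x : ℝ} (hx : 0 ≤ x) : 0 < F1f x := by
  have := erfc_pos hx
  unfold F1f
  positivity

lemma F1f_zero : F1f 0 = 1 := by simp [F1f, erfc, erf_zero]

lemma F1f_le_one {x : ℝ} (hx : 0 ≤ x) : F1f x ≤ 1 := by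
  have := F1f_anti (self_mem_Ici (a := (0:ℝ))) hx hx
  rwa [F1f_zero] at this




lemma frac_lt {n1 n2 d1 d2 : ℝ} (hn : n2 < n1) (hd : d1 ≤ d2) (hn2 : 0 ≤ n2)
    (hd1 : 0 < d1) : n2 / d2 < n1 / d1 := by
  have h1 : n2 / d2 ≤ n2 / d1 := by gcongr
  have h2 : n2 / d1 < n1 / d1 := by gcongr
  linarith

lemma x_exp_sq_atTop : Tendsto (fun x : ℝ => x * Real.exp (x ^ 2)) atTop atTop := by
  apply tendsto_atTop_mono' atTop _ tendsto_id
  filter_upwards [eventually_ge_atTop (0:ℝ)] with x hx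
  have h1 : (1:ℝ) ≤ Real.exp (x ^ 2) := Real.one_le_exp (by positivity)
  have : id x = x := rfl
  nlinarith


end WfAux

/-- `W` is strictly increasing on `(0,∞)`, with
`W(x) → T_∞ + (T₀ − T_∞)/(1 + h₀√(π α_l)/k_l)` as `x → 0⁺` and
`W(x) → T₀ + γρα_l/k_l` as `x → +∞`. -/
theorem Wf_strictMonoOn_limits (γ ρ h₀ ks kl αs αl T₀ Tinf : ℝ)
    (hγ : 0 < γ) (hρ : 0 < ρ) (hh₀ : 0 < h₀) (hks : 0 < ks) (hkl : 0 < kl)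
    (hαs : 0 < αs) (hαl : 0 < αl) (hT : Tinf < T₀) :
    StrictMonoOn (Wf γ ρ h₀ ks kl αs αl T₀ Tinf) (Set.Ioi (0 : ℝ)) ∧
    Tendsto (Wf γ ρ h₀ ks kl αs αl T₀ Tinf) (nhdsWithin 0 (Set.Ioi 0))
      (nhds (Tinf + (T₀ - Tinf) / (1 + h₀ * Real.sqrt (π * αl) / kl))) ∧
    Tendsto (Wf γ ρ h₀ ks kl αs αl T₀ Tinf) atTop
      (nhds (T₀ + γ * ρ * αl / kl)) := by
  have hsal : 0 < Real.sqrt αl := Real.sqrt_pos.2 hαl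
  have hsas : 0 < Real.sqrt αs := Real.sqrt_pos.2 hαs
  set c : ℝ := Real.sqrt αs / Real.sqrt αl with hc_def
  have hc : 0 < c := div_pos hsas hsal
  have hspal : 0 < Real.sqrt (π * αl) := Real.sqrt_pos.2 (mul_pos Real.pi_pos hαl)
  have hspas : 0 < Real.sqrt (π * αs) := Real.sqrt_pos.2 (mul_pos Real.pi_pos hαs)
  set C : ℝ := h₀ * ks * Real.sqrt (π * αl) with hC_def
  have hC : 0 < C := by positivity
  set E : ℝ → ℝ := fun x => ks + h₀ * Real.sqrt (π * αs) * erf x with hE_def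
  have hcont_E : Continuous E := by
    apply continuous_const.add (continuous_const.mul continuous_erf)
  have hE_pos : ∀ x : ℝ, 0 ≤ x → 0 < E x := fun x hx => by
    have h1 := erf_nonneg hx
    have h2 : 0 ≤ h₀ * Real.sqrt (π * αs) * erf x := by positivity
    simp only [hE_def]; linarith
  have hE_lt : ∀ a b : ℝ, a < b → E a < E b := fun a b hab => by
    have h1 := erf_strictMono hab
    simp only [hE_def]
    have h2 : h₀ * Real.sqrt (π * αs) * erf a < h₀ * Real.sqrt (π * αs) * erf b :=
      mul_lt_mul_of_pos_left h1 (by positivity)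
    linarith
  have hF2 : ∀ x : ℝ, F2f h₀ ks kl αs αl x
      = C * Real.exp (-x ^ 2) * F1f (c * x) / (kl * E x) := fun x => rfl
  have hHf : ∀ x : ℝ, Hf h₀ ks kl αs αl x
      = C / (x * Real.exp (x ^ 2) * E x)
        + kl * Real.sqrt (π * αs) / (Real.sqrt αl * Qf (c * x)) := fun x => rfl
  have hF2_pos : ∀ x : ℝ, 0 < x → 0 < F2f h₀ ks kl αs αl x := by
    intro x hx
    rw [hF2]
    have h1 : 0 < F1f (c * x) := F1f_pos (by positivity)
    exact div_pos (mul_pos (mul_pos hC (Real.exp_pos _)) h1)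
      (mul_pos hkl (hE_pos x hx.le))
  have hF2_anti : ∀ a b : ℝ, 0 < a → a < b →
      F2f h₀ ks kl αs αl b < F2f h₀ ks kl αs αl a := by
    intro a b ha hab
    have hb : 0 < b := ha.trans hab
    rw [hF2, hF2]
    have hEa := hE_pos a ha.le
    have hEb := hE_pos b hb.le
    have hF1a : 0 < F1f (c * a) := F1f_pos (by positivity)
    have hF1b : 0 < F1f (c * b) := F1f_pos (by positivity)
    apply frac_lt
    · have h1 : F1f (c * b) ≤ F1f (c * a) := by
        apply F1f_anti (Set.mem_Ici.2 (by positivity)) (Set.mem_Ici.2 (by positivity))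
        nlinarith
      have h2 : Real.exp (-b ^ 2) < Real.exp (-a ^ 2) :=
        Real.exp_lt_exp.2 (by nlinarith)
      calc C * Real.exp (-b ^ 2) * F1f (c * b)
          ≤ C * Real.exp (-b ^ 2) * F1f (c * a) :=
            mul_le_mul_of_nonneg_left h1 (by positivity)
        _ < C * Real.exp (-a ^ 2) * F1f (c * a) :=
            mul_lt_mul_of_pos_right (mul_lt_mul_of_pos_left h2 hC) hF1a
    · exact mul_le_mul_of_nonneg_left (hE_lt a b hab).le hkl.le
    · exact (mul_pos (mul_pos hC (Real.exp_pos _)) hF1b).le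
    · exact mul_pos hkl hEa
  have hQc_pos : ∀ x : ℝ, 0 < x → 0 < Qf (c * x) := fun x hx => Qf_pos (by positivity)
  have hH_pos : ∀ x : ℝ, 0 < x → 0 < Hf h₀ ks kl αs αl x := by
    intro x hx
    rw [hHf]
    have h1 : 0 < C / (x * Real.exp (x ^ 2) * E x) :=
      div_pos hC (mul_pos (mul_pos hx (Real.exp_pos _)) (hE_pos x hx.le))
    have h2 : 0 < kl * Real.sqrt (π * αs) / (Real.sqrt αl * Qf (c * x)) :=
      div_pos (mul_pos hkl hspas) (mul_pos hsal (hQc_pos x hx))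
    linarith
  have hH_anti : ∀ a b : ℝ, 0 < a → a < b →
      Hf h₀ ks kl αs αl b < Hf h₀ ks kl αs αl a := by
    intro a b ha hab
    have hb : 0 < b := ha.trans hab
    rw [hHf, hHf]
    have hEa := hE_pos a ha.le
    have hEb := hE_pos b hb.le
    have hP : C / (b * Real.exp (b ^ 2) * E b) < C / (a * Real.exp (a ^ 2) * E a) := by
      apply div_lt_div_of_pos_left hC
        (mul_pos (mul_pos ha (Real.exp_pos _)) hEa)
      have h1 : a * Real.exp (a ^ 2) < b * Real.exp (b ^ 2) := by
        have h2 : Real.exp (a ^ 2) < Real.exp (b ^ 2) := Real.exp_lt_exp.2 (by nlinarith)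
        nlinarith [Real.exp_pos (a ^ 2), Real.exp_pos (b ^ 2)]
      exact mul_lt_mul'' h1 (hE_lt a b hab) (by positivity) hEa.le
    have hS : kl * Real.sqrt (π * αs) / (Real.sqrt αl * Qf (c * b))
        ≤ kl * Real.sqrt (π * αs) / (Real.sqrt αl * Qf (c * a)) := by
      apply div_le_div_of_nonneg_left (by positivity)
        (mul_pos hsal (hQc_pos a ha))
      have h1 : Qf (c * a) ≤ Qf (c * b) := by
        apply Qf_mono (Set.mem_Ici.2 (by positivity)) (Set.mem_Ici.2 (by positivity))
        nlinarith
      exact mul_le_mul_of_nonneg_left h1 hsal.le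
    linarith
  refine ⟨?_, ?_, ?_⟩
  · intro a ha b hb hab
    simp only [Set.mem_Ioi] at ha hb
    unfold Wf
    have hA : (T₀ - Tinf) / (F2f h₀ ks kl αs αl a + 1)
        < (T₀ - Tinf) / (F2f h₀ ks kl αs αl b + 1) := by
      apply div_lt_div_of_pos_left (by linarith) (by linarith [hF2_pos b hb])
      linarith [hF2_anti a b ha hab]
    have hB : γ * ρ * Real.sqrt (π * αs * αl) / Hf h₀ ks kl αs αl a
        < γ * ρ * Real.sqrt (π * αs * αl) / Hf h₀ ks kl αs αl b := by
      apply div_lt_div_of_pos_left (by positivity) (hH_pos b hb)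
      exact hH_anti a b ha hab
    linarith
  · -- limit at 0⁺
    have hcont_num : Continuous (fun x : ℝ => C * Real.exp (-x ^ 2) * F1f (c * x)) := by
      apply Continuous.mul
      · exact continuous_const.mul (Real.continuous_exp.comp (continuous_pow 2).neg)
      · exact continuous_F1f.comp (continuous_const.mul continuous_id)
    have hF2_lim : Tendsto (F2f h₀ ks kl αs αl) (nhdsWithin 0 (Set.Ioi 0))
        (nhds (h₀ * Real.sqrt (π * αl) / kl)) := by
      have hcont : ContinuousAt (F2f h₀ ks kl αs αl) 0 := by
        have hcden : Continuous fun x : ℝ => kl * E x := continuous_const.mul hcont_E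
        have h := ContinuousAt.div (hcont_num.continuousAt)
          (hcden.continuousAt (x := 0)) ?_
        · apply h.congr
          filter_upwards with x
          rw [hF2, Pi.div_apply]
        · simp only [hE_def, erf_zero, mul_zero, add_zero]
          positivity
      have hval : F2f h₀ ks kl αs αl 0 = h₀ * Real.sqrt (π * αl) / kl := by
        rw [hF2]
        simp only [hE_def, erf_zero, mul_zero, add_zero, neg_zero, Real.exp_zero,
          F1f_zero]
        rw [show (-(0:ℝ) ^ 2) = 0 by norm_num, Real.exp_zero]
        rw [hC_def]
        field_simp
      rw [← hval]
      exact hcont.continuousWithinAt.tendsto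
    have hA_lim : Tendsto (fun x => (T₀ - Tinf) / (F2f h₀ ks kl αs αl x + 1))
        (nhdsWithin 0 (Set.Ioi 0))
        (nhds ((T₀ - Tinf) / (h₀ * Real.sqrt (π * αl) / kl + 1))) := by
      apply Tendsto.div tendsto_const_nhds (hF2_lim.add tendsto_const_nhds)
      positivity
    have hH_top : Tendsto (Hf h₀ ks kl αs αl) (nhdsWithin 0 (Set.Ioi 0)) atTop := by
      have hd_lim : Tendsto (fun x : ℝ => x * Real.exp (x ^ 2) * E x)
          (nhdsWithin 0 (Set.Ioi 0)) (nhdsWithin 0 (Set.Ioi 0)) := by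
        rw [tendsto_nhdsWithin_iff]
        constructor
        · have hcont : Continuous (fun x : ℝ => x * Real.exp (x ^ 2) * E x) := by
            exact (continuous_id.mul (Real.continuous_exp.comp (continuous_pow 2))).mul hcont_E
          have h1 := hcont.continuousAt (x := 0)
          have h2 : Tendsto (fun x : ℝ => x * Real.exp (x ^ 2) * E x)
              (nhdsWithin 0 (Set.Ioi 0)) (nhds (0 * Real.exp ((0:ℝ) ^ 2) * E 0)) :=
            (h1.continuousWithinAt).tendsto
          simpa using h2
        · filter_upwards [self_mem_nhdsWithin] with x hx
          have hx' : (0:ℝ) < x := hx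
          exact mul_pos (mul_pos hx' (Real.exp_pos _)) (hE_pos x hx'.le)
      have hP_top : Tendsto (fun x : ℝ => C / (x * Real.exp (x ^ 2) * E x))
          (nhdsWithin 0 (Set.Ioi 0)) atTop := by
        have hinv := hd_lim.inv_tendsto_nhdsGT_zero
        have h2 := hinv.const_mul_atTop hC
        simpa [div_eq_mul_inv] using h2
      apply tendsto_atTop_mono' _ _ hP_top
      filter_upwards [self_mem_nhdsWithin] with x hx
      have hx' : (0:ℝ) < x := hx
      rw [hHf]
      have h2 : 0 ≤ kl * Real.sqrt (π * αs) / (Real.sqrt αl * Qf (c * x)) :=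
        (div_pos (mul_pos hkl hspas) (mul_pos hsal (hQc_pos x hx'))).le
      linarith
    have hB_lim : Tendsto (fun x => γ * ρ * Real.sqrt (π * αs * αl) / Hf h₀ ks kl αs αl x)
        (nhdsWithin 0 (Set.Ioi 0)) (nhds 0) :=
      Tendsto.div_atTop tendsto_const_nhds hH_top
    have hsum := ((tendsto_const_nhds (x := Tinf)
      (f := nhdsWithin 0 (Set.Ioi 0))).add hA_lim).add hB_lim
    convert hsum using 2
    · rfl
    · rw [add_zero, add_comm (1:ℝ)]
  · -- limit at atTop
    have hE_lim : Tendsto E atTop (nhds (ks + h₀ * Real.sqrt (π * αs))) := by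
      have h := (erf_tendsto_one.const_mul (h₀ * Real.sqrt (π * αs))).const_add ks
      simp only [mul_one] at h
      exact h
    have hexp_lim : Tendsto (fun x : ℝ => Real.exp (-x ^ 2)) atTop (nhds 0) := by
      apply Real.tendsto_exp_atBot.comp
      apply tendsto_neg_atBot_iff.2
      exact tendsto_pow_atTop (by norm_num)
    have hF2_lim : Tendsto (F2f h₀ ks kl αs αl) atTop (nhds 0) := by
      have hnum : Tendsto (fun x : ℝ => C * Real.exp (-x ^ 2) * F1f (c * x))
          atTop (nhds 0) := by
        apply squeeze_zero' _ _ (by simpa using hexp_lim.const_mul C)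
        · filter_upwards [eventually_ge_atTop (0:ℝ)] with x hx
          have h1 : 0 < F1f (c * x) := F1f_pos (by positivity)
          have h2 : 0 < Real.exp (-x ^ 2) := Real.exp_pos _
          positivity
        · filter_upwards [eventually_ge_atTop (0:ℝ)] with x hx
          have h1 : F1f (c * x) ≤ 1 := F1f_le_one (by positivity)
          calc C * Real.exp (-x ^ 2) * F1f (c * x) ≤ C * Real.exp (-x ^ 2) * 1 :=
              mul_le_mul_of_nonneg_left h1 (by positivity)
            _ = C * Real.exp (-x ^ 2) := mul_one _
      have hden : Tendsto (fun x : ℝ => kl * E x) atTop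
          (nhds (kl * (ks + h₀ * Real.sqrt (π * αs)))) := hE_lim.const_mul kl
      have h3 := hnum.div hden (by positivity)
      simp only [zero_div] at h3
      apply h3.congr
      intro x
      rw [hF2, Pi.div_apply]
    have hA_lim : Tendsto (fun x => (T₀ - Tinf) / (F2f h₀ ks kl αs αl x + 1))
        atTop (nhds (T₀ - Tinf)) := by
      have h := Tendsto.div (tendsto_const_nhds (x := T₀ - Tinf) (f := atTop))
        (hF2_lim.add tendsto_const_nhds) (by norm_num : (0:ℝ) + 1 ≠ 0)
      simpa [Pi.div_def] using h
    have hH_lim : Tendsto (Hf h₀ ks kl αs αl) atTop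
        (nhds (kl * Real.sqrt (π * αs) / Real.sqrt αl)) := by
      have hP : Tendsto (fun x : ℝ => C / (x * Real.exp (x ^ 2) * E x)) atTop (nhds 0) := by
        apply Tendsto.div_atTop tendsto_const_nhds
        exact Filter.Tendsto.atTop_mul_pos (by positivity) x_exp_sq_atTop hE_lim
      have hQc : Tendsto (fun x : ℝ => Qf (c * x)) atTop (nhds 1) := by
        apply Qf_tendsto_one.comp
        exact (tendsto_id.const_mul_atTop hc)
      have hS : Tendsto (fun x : ℝ => kl * Real.sqrt (π * αs) / (Real.sqrt αl * Qf (c * x)))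
          atTop (nhds (kl * Real.sqrt (π * αs) / Real.sqrt αl)) := by
        have h := Tendsto.div (tendsto_const_nhds (x := kl * Real.sqrt (π * αs)) (f := atTop))
          ((tendsto_const_nhds (x := Real.sqrt αl) (f := atTop)).mul hQc) (by positivity)
        simpa [Pi.div_def] using h
      have h := hP.add hS
      simp only [zero_add] at h
      apply h.congr
      intro x
      rw [hHf]
    have hB_lim : Tendsto (fun x => γ * ρ * Real.sqrt (π * αs * αl) / Hf h₀ ks kl αs αl x)
        atTop (nhds (γ * ρ * αl / kl)) := by
      have h := Tendsto.div (tendsto_const_nhds (x := γ * ρ * Real.sqrt (π * αs * αl))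
        (f := atTop)) hH_lim (by positivity)
      have hval : γ * ρ * Real.sqrt (π * αs * αl) / (kl * Real.sqrt (π * αs) / Real.sqrt αl)
          = γ * ρ * αl / kl := by
        have h1 : Real.sqrt (π * αs * αl) = Real.sqrt (π * αs) * Real.sqrt αl := by
          rw [Real.sqrt_mul (by positivity : (0:ℝ) ≤ π * αs)]
        have h2 : Real.sqrt αl * Real.sqrt αl = αl := Real.mul_self_sqrt hαl.le
        rw [h1]
        rw [div_eq_div_iff (by positivity) (by positivity : kl ≠ 0)]
        field_simp
        linear_combination h2
      rw [← hval]
      exact h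
    have hsum := (hA_lim.const_add Tinf).add hB_lim
    have : Tinf + (T₀ - Tinf) + γ * ρ * αl / kl = T₀ + γ * ρ * αl / kl := by ring
    rw [this] at hsum
    exact hsum
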